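/- arXiv:1904.03637 — 2 statements merged into one kernel-verified Lean document; each statement's English description precedes it below -/
import Mathlib

section
/- Let α₀ ≥ α₁ ≥ … ≥ α_{ℓ−1} be ordinals such that for each i < ℓ − 1 every remainder of αᵢ is order-isomorphic to αᵢ. If α₀ + α₁ + … + α_{ℓ−1} has finite big Ramsey degrees, then for all m ≥ 1 and all 0 ≤ j₀ < j₁ < … < j_{m−1} ≤ ℓ−1, the subsum α_{j₀} + α_{j₁} + … + α_{j_{m−1}} has finite big Ramsey degrees, and indeed T(n, subsum) ≤ T(n, full sum) for all n ≥ 1. -/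
open Set

/-- The big Ramsey degree of the `n`-element chain in the chain `C` is at most `t`:
for every `k ≥ 2` and every `k`-coloring of the `n`-element subchains of `C`
(identified with order-embeddings `Fin n ↪o C`) there is a subset `U ⊆ C`
order-isomorphic to `C` on which the coloring attains at most `t` values. -/
def brdLE (C : Type*) [LinearOrder C] (n t : ℕ) : Prop :=
  ∀ k : ℕ, 2 ≤ k → ∀ χ : (Fin n ↪o C) → Fin k,
    ∃ U : Set C, Nonempty (U ≃o C) ∧ (χ '' {f | ∀ i, f i ∈ U}).ncard ≤ t

/-- `T(n, C) = t`: `t` is the least natural number with `brdLE C n t`. -/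
def hasBRD (C : Type*) [LinearOrder C] (n t : ℕ) : Prop :=
  brdLE C n t ∧ ∀ s : ℕ, brdLE C n s → t ≤ s

/-- `C` has finite big Ramsey degrees: `T(n, C) < ∞` for every `n ≥ 1`. -/
def finiteBRD (C : Type*) [LinearOrder C] : Prop :=
  ∀ n : ℕ, 1 ≤ n → ∃ t : ℕ, brdLE C n t

namespace Stmt16Aux

universe u v
open Ordinal

/-! ### Finite sums of ordinals -/

def osum : (l : ℕ) → (Fin l → Ordinal) → Ordinal
  | 0, _ => 0
  | (l+1), f => f 0 + osum l (fun i => f i.succ)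

lemma osum_le {l : ℕ} {f g : Fin l → Ordinal} (h : ∀ i, f i ≤ g i) :
    osum l f ≤ osum l g := by
  induction l with
  | zero => simp [osum]
  | succ l ih => exact add_le_add (h 0) (ih fun i => h i.succ)

lemma claimD {β : Ordinal} (hβ : ∀ ξ < β, ξ + β = β) (hβ0 : 0 < β) :
    ∀ (p : ℕ) (r : Fin p → Ordinal), (∀ i, r i ≤ β) → osum p r < β + osum p r := by
  intro p
  induction p with
  | zero => intro r _; simpa [osum] using hβ0
  | succ p ih =>
    intro r hr
    have ihrest := ih (fun i => r i.succ) (fun i => hr i.succ)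
    show r 0 + osum p _ < β + (r 0 + osum p _)
    rcases lt_or_eq_of_le (hr 0) with h0 | h0
    · calc r 0 + osum p (fun i => r i.succ)
          < r 0 + (β + osum p (fun i => r i.succ)) := add_lt_add_right ihrest _
        _ = (r 0 + β) + osum p (fun i => r i.succ) := (add_assoc _ _ _).symm
        _ = β + osum p (fun i => r i.succ) := by rw [hβ _ h0]
        _ ≤ β + (r 0 + osum p (fun i => r i.succ)) :=
            add_le_add_right le_add_self _
    · rw [h0]
      exact add_lt_add_right ihrest _

lemma subLemma {β : Ordinal} (hβ : ∀ ξ < β, ξ + β = β) :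
    ∀ (p : ℕ) (r : Fin p → Ordinal), (∀ i, r i ≤ β) →
      ∀ tt, tt < β → tt + osum p r < β + osum p r := by
  intro p
  induction p with
  | zero => intro r _ tt htt; simpa [osum] using htt
  | succ p ih =>
    intro r hr tt htt
    have hβ0 : 0 < β := lt_of_le_of_lt zero_le htt
    show tt + (r 0 + osum p _) < β + (r 0 + osum p _)
    rcases lt_or_eq_of_le (hr 0) with h0 | h0
    · have htt' : tt + r 0 < β := by
        calc tt + r 0 < tt + β := add_lt_add_right h0 tt
          _ = β := hβ tt htt
      calc tt + (r 0 + osum p (fun i => r i.succ))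
          = (tt + r 0) + osum p (fun i => r i.succ) := (add_assoc _ _ _).symm
        _ < β + osum p (fun i => r i.succ) := ih _ (fun i => hr i.succ) _ htt'
        _ ≤ β + (r 0 + osum p (fun i => r i.succ)) :=
            add_le_add_right le_add_self _
    · rw [h0]
      calc tt + (β + osum p (fun i => r i.succ))
          = (tt + β) + osum p (fun i => r i.succ) := (add_assoc _ _ _).symm
        _ = β + osum p (fun i => r i.succ) := by rw [hβ tt htt]
        _ < β + (β + osum p (fun i => r i.succ)) :=
            add_lt_add_right (claimD hβ hβ0 p _ fun i => hr i.succ) _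

lemma strictLemma :
    ∀ (l : ℕ) (α t : Fin l → Ordinal),
      (∀ i j : Fin l, i ≤ j → α j ≤ α i) →
      (∀ i : Fin l, (i : ℕ) < l - 1 → ∀ ξ < α i, ξ + α i = α i) →
      (∀ i, t i ≤ α i) → ∀ i₀ : Fin l, t i₀ < α i₀ →
      osum l t < osum l α := by
  intro l
  induction l with
  | zero => intro _ _ _ _ _ i₀; exact i₀.elim0
  | succ l ih =>
    intro α t hmono hind ht i₀ h0
    induction i₀ using Fin.cases with
    | zero =>
      rcases Nat.eq_zero_or_pos l with rfl | hl
      · show t 0 + osum 0 _ < α 0 + osum 0 _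
        simpa [osum] using h0
      · have hβ : ∀ ξ < α 0, ξ + α 0 = α 0 := hind 0 (by simpa using hl)
        calc t 0 + osum l (fun i => t i.succ)
            < α 0 + osum l (fun i => t i.succ) :=
              subLemma hβ l _ (fun i => le_trans (ht i.succ) (hmono 0 i.succ (Fin.zero_le _))) _ h0
          _ ≤ α 0 + osum l (fun i => α i.succ) :=
              add_le_add_right (osum_le fun i => ht i.succ) _
    | succ k =>
      have hrest : osum l (fun i => t i.succ) < osum l (fun i => α i.succ) := by
        refine ih _ _ (fun i j hij => hmono i.succ j.succ (by simpa using hij))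
          (fun i hi ξ hξ => hind i.succ (by simp; omega) ξ hξ) (fun i => ht i.succ) k h0
      calc t 0 + osum l (fun i => t i.succ)
          ≤ α 0 + osum l (fun i => t i.succ) := add_le_add_left (ht 0) _
        _ < α 0 + osum l (fun i => α i.succ) := add_lt_add_right hrest _


lemma lex_lt_of_parts {l : ℕ} {X Y : Fin l → Type u} [∀ i, LT (X i)] [∀ i, LT (Y i)]
    (P : ∀ i, X i → Prop)
    (F : ∀ i (x : X i), P i x → Y i)
    (hF : ∀ i x x' hx hx', x < x' → F i x hx < F i x' hx')
    (a b : Σ i, X i) (ha : P a.1 a.2) (hb : P b.1 b.2)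
    (h : Sigma.Lex (·<·) (fun _ => (·<·)) a b) :
    Sigma.Lex (·<·) (fun _ => (·<·))
      (⟨a.1, F a.1 a.2 ha⟩ : Σ i, Y i) ⟨b.1, F b.1 b.2 hb⟩ := by
  cases h with
  | left x y hij => exact Sigma.Lex.left _ _ hij
  | right x y hxy => exact Sigma.Lex.right _ _ (hF _ _ _ _ _ hxy)

/-! ### Order types of lexicographic sigma sums -/

instance sigmaLex_wflt {l : ℕ} {X : Fin l → Type u}
    [∀ i, LinearOrder (X i)] [∀ i, WellFoundedLT (X i)] :
    WellFoundedLT (Σₗ i, X i) := by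
  constructor
  have hwf : WellFounded
      (PSigma.Lex ((·<·) : Fin l → Fin l → Prop) (fun i => ((·<·) : X i → X i → Prop))) :=
    WellFounded.psigma_lex (Finite.to_wellFoundedLT).wf (fun _ => wellFounded_lt)
  have h2 : WellFounded (InvImage
      (PSigma.Lex ((·<·) : Fin l → Fin l → Prop) (fun i => ((·<·) : X i → X i → Prop)))
      (fun a : Σₗ i, X i => (⟨(ofLex a).1, (ofLex a).2⟩ : Σ' i, X i))) :=
    InvImage.wf _ hwf
  refine Subrelation.wf ?_ h2
  intro a b h
  have h' : Sigma.Lex (·<·) (fun i => (·<·)) (ofLex a) (ofLex b) := h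
  cases h' with
  | left x y hij => exact PSigma.Lex.left _ _ hij
  | right x y hab => exact PSigma.Lex.right _ hab

theorem type_sigma_zero (X : Fin 0 → Type u)
    [∀ i, LinearOrder (X i)] [∀ i, WellFoundedLT (X i)] :
    Ordinal.type ((·<·) : (Σₗ i, X i) → (Σₗ i, X i) → Prop) = 0 := by
  have : IsEmpty (Σₗ i, X i) := ⟨fun a => (ofLex a).1.elim0⟩
  rw [Ordinal.type_eq_zero_iff_isEmpty.2 this]

theorem type_sigma_succ (l : ℕ) (X : Fin (l+1) → Type u)
    [∀ i, LinearOrder (X i)] [∀ i, WellFoundedLT (X i)] :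
    Ordinal.type ((·<·) : (Σₗ i, X i) → (Σₗ i, X i) → Prop)
      = Ordinal.type ((·<·) : X 0 → X 0 → Prop)
        + Ordinal.type ((·<·) : (Σₗ i : Fin l, X i.succ) → _ → Prop) := by
    let f1 : (Σₗ i, X i) → (X 0 ⊕ (Σₗ i : Fin l, X i.succ)) :=
      fun a => Fin.cases (motive := fun i => X i → (X 0 ⊕ (Σₗ i : Fin l, X i.succ)))
        Sum.inl (fun k y => Sum.inr (toLex ⟨k, y⟩)) (ofLex a).1 (ofLex a).2
    let g1 : (X 0 ⊕ (Σₗ i : Fin l, X i.succ)) → (Σₗ i, X i) :=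
      Sum.elim (fun x => toLex ⟨0, x⟩) (fun q => toLex ⟨(ofLex q).1.succ, (ofLex q).2⟩)
    have hf1 : ∀ a b : (Σₗ i, X i), a < b →
        Sum.Lex ((·<·) : X 0 → X 0 → Prop)
          ((·<·) : (Σₗ i : Fin l, X i.succ) → _ → Prop) (f1 a) (f1 b) := by
      intro a b h
      have h' : Sigma.Lex (·<·) (fun i => (·<·)) (ofLex a) (ofLex b) := h
      cases h' with
      | left x y hij =>
        rename_i i k
        induction k using Fin.cases with
        | zero => exact absurd hij (Fin.not_lt_zero i)
        | succ k =>
          induction i using Fin.cases with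
          | zero => exact Sum.Lex.sep _ _
          | succ i =>
            simp only [f1, Fin.cases_succ]
            exact Sum.Lex.inr (Sigma.Lex.left _ _ (Fin.succ_lt_succ_iff.mp hij))
      | right x y hxy =>
        rename_i i
        induction i using Fin.cases with
        | zero => exact Sum.Lex.inl hxy
        | succ i =>
          simp only [f1, Fin.cases_succ]
          exact Sum.Lex.inr (Sigma.Lex.right _ _ hxy)
    have hg1 : ∀ a b : (X 0 ⊕ (Σₗ i : Fin l, X i.succ)),
        Sum.Lex ((·<·) : X 0 → X 0 → Prop)
          ((·<·) : (Σₗ i : Fin l, X i.succ) → _ → Prop) a b → g1 a < g1 b := by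
      intro a b h
      cases h with
      | inl h => exact Sigma.Lex.right (i := (0 : Fin (l+1))) _ _ h
      | sep x q => exact Sigma.Lex.left _ _ (Fin.succ_pos _)
      | inr h =>
        have h' : Sigma.Lex (·<·) (fun i => (·<·)) _ _ := h
        cases h' with
        | left x y hij => exact Sigma.Lex.left _ _ (Fin.succ_lt_succ_iff.mpr hij)
        | right x y hxy => exact Sigma.Lex.right _ _ hxy
    have e1 := (RelEmbedding.ofMonotone f1 hf1).ordinal_type_le
    have e2 := (RelEmbedding.ofMonotone g1 hg1).ordinal_type_le
    have heq := le_antisymm e1 (by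
      rw [Ordinal.type_sum_lex] at e2 ⊢
      exact e2)
    rw [heq, Ordinal.type_sum_lex]

theorem type_sigma : (l : ℕ) → (X : Fin l → Type u) →
    (instL : ∀ i, LinearOrder (X i)) → (instW : ∀ i, WellFoundedLT (X i)) →
    Ordinal.type ((·<·) : (Σₗ i, X i) → (Σₗ i, X i) → Prop)
      = osum l (fun i => Ordinal.type ((·<·) : X i → X i → Prop))
  | 0, X, instL, instW => type_sigma_zero X
  | (l+1), X, instL, instW => by
    rw [type_sigma_succ l X,
      type_sigma l (fun i => X i.succ) (fun i => instL i.succ) (fun i => instW i.succ)]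
    rfl

lemma typeIio (o : Ordinal.{u}) :
    Ordinal.type ((·<·) : ↥(Set.Iio o) → ↥(Set.Iio o) → Prop)
      = Ordinal.lift.{u+1, u} o := by
  haveI : IsWellOrder o.ToType ((·<·)) :=
    @isWellOrder_lt o.ToType (linearOrder_toType o) (wellFoundedLT_toType o)
  have h : Ordinal.lift.{u, u+1} (Ordinal.type ((·<·) : ↥(Set.Iio o) → ↥(Set.Iio o) → Prop))
      = Ordinal.lift.{u+1, u} (Ordinal.type ((·<·) : o.ToType → o.ToType → Prop)) :=
    (Ordinal.ToType.mk (o := o)).toRelIsoLT.ordinal_lift_type_eq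
  rw [Ordinal.type_toType] at h
  rw [← h, Ordinal.lift_id'.{u, u+1}]

end Stmt16Aux

open Stmt16Aux in
/-- Passing to a subsum: if `α₀ ≥ … ≥ α_{ℓ-1}` are ordinals, each `αᵢ` with `i < ℓ - 1`
having all remainders order-isomorphic to itself, and the lexicographic sum `Σᵢ αᵢ` has
finite big Ramsey degrees, then every subsum `α_{j₀} + … + α_{j_{m-1}}` has finite big
Ramsey degrees, with `T(n, subsum) ≤ T(n, full sum)` for all `n ≥ 1`. -/
theorem stmt16 (l : ℕ) (α : Fin l → Ordinal)
    (hmono : ∀ i j : Fin l, i ≤ j → α j ≤ α i)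
    (hrem : ∀ i : Fin l, (i : ℕ) < l - 1 → ∀ ξ : Ordinal, ξ < α i → α i - ξ = α i)
    (hfin : finiteBRD (Σₗ i : Fin l, ↥(Set.Iio (α i))))
    (m : ℕ) (hm : 1 ≤ m) (j : Fin m ↪o Fin l) :
    finiteBRD (Σₗ i : Fin m, ↥(Set.Iio (α (j i)))) ∧
    ∀ n : ℕ, 1 ≤ n → ∀ t : ℕ,
      brdLE (Σₗ i : Fin l, ↥(Set.Iio (α i))) n t →
      brdLE (Σₗ i : Fin m, ↥(Set.Iio (α (j i)))) n t := by
  classical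
  have key : ∀ n t : ℕ,
      brdLE (Σₗ i : Fin l, ↥(Set.Iio (α i))) n t →
      brdLE (Σₗ i : Fin m, ↥(Set.Iio (α (j i)))) n t := by
    intro n t hC k hk χ
    -- the canonical embedding of the subsum into the full sum
    let uS : (Σₗ i : Fin m, ↥(Set.Iio (α (j i)))) → (Σₗ i : Fin l, ↥(Set.Iio (α i))) :=
      fun s => toLex ⟨j (ofLex s).1, (ofLex s).2⟩
    have huS : StrictMono uS := by
      intro a b hab
      have hab' : Sigma.Lex (·<·) (fun _ => (·<·)) (ofLex a) (ofLex b) := hab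
      cases hab' with
      | left x y hij => exact Sigma.Lex.left _ _ (j.lt_iff_lt.2 hij)
      | right x y hxy => exact Sigma.Lex.right _ _ hxy
    let ι : (Σₗ i : Fin m, ↥(Set.Iio (α (j i)))) ↪o (Σₗ i : Fin l, ↥(Set.Iio (α i))) :=
      OrderEmbedding.ofStrictMono uS huS
    -- the induced coloring on the full sum
    let χ' : (Fin n ↪o (Σₗ i : Fin l, ↥(Set.Iio (α i)))) → Fin k :=
      fun h => if hg : ∃ g : Fin n ↪o (Σₗ i : Fin m, ↥(Set.Iio (α (j i)))), h = g.trans ι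
        then χ hg.choose else ⟨0, by omega⟩
    obtain ⟨U, ⟨ψ⟩, hcard⟩ := hC k hk χ'
    let e : (Σₗ i : Fin l, ↥(Set.Iio (α i))) → (Σₗ i : Fin l, ↥(Set.Iio (α i))) :=
      fun c => ((ψ.symm c : U) : (Σₗ i : Fin l, ↥(Set.Iio (α i))))
    have he : StrictMono e := fun a b hab => Subtype.coe_lt_coe.2 (ψ.symm.strictMono hab)
    have heU : ∀ c, e c ∈ U := fun c => (ψ.symm c).2
    -- the traces of U on each summand
    let A : Fin l → Set Ordinal := fun i =>
      {x | ∃ hx : x ∈ Set.Iio (α i),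
        (toLex ⟨i, ⟨x, hx⟩⟩ : Σₗ i : Fin l, ↥(Set.Iio (α i))) ∈ U}
    let E : (Σₗ i : Fin l, ↥(Set.Iio (α i))) → (Σₗ i : Fin l, ↥(A i)) :=
      fun c => toLex ⟨(ofLex (e c)).1,
        ⟨((ofLex (e c)).2 : Ordinal), ⟨(ofLex (e c)).2.2, heU c⟩⟩⟩
    have hE : ∀ a b, a < b → E a < E b := by
      intro a b hab
      have h2' : Sigma.Lex (·<·) (fun _ => (·<·)) (ofLex (e a)) (ofLex (e b)) := he hab
      exact lex_lt_of_parts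
        (fun i x => (toLex ⟨i, x⟩ : Σₗ i : Fin l, ↥(Set.Iio (α i))) ∈ U)
        (fun i x hx => (⟨(x : Ordinal), ⟨x.2, hx⟩⟩ : ↥(A i)))
        (fun i x x' hx hx' hlt => hlt)
        (ofLex (e a)) (ofLex (e b)) (heU a) (heU b) h2'
    have h1 : Ordinal.type
          ((·<·) : (Σₗ i : Fin l, ↥(Set.Iio (α i))) → (Σₗ i : Fin l, ↥(Set.Iio (α i))) → Prop)
        ≤ Ordinal.type ((·<·) : (Σₗ i : Fin l, ↥(A i)) → (Σₗ i : Fin l, ↥(A i)) → Prop) :=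
      (RelEmbedding.ofMonotone E hE).ordinal_type_le
    rw [type_sigma l (fun i => ↥(Set.Iio (α i))) (fun i => inferInstance) (fun i => inferInstance),
      type_sigma l (fun i => ↥(A i)) (fun i => inferInstance) (fun i => inferInstance)] at h1
    -- ordinal arithmetic: each trace has full order type
    have hβmono : ∀ i i' : Fin l, i ≤ i' →
        Ordinal.type ((·<·) : ↥(Set.Iio (α i')) → ↥(Set.Iio (α i')) → Prop)
          ≤ Ordinal.type ((·<·) : ↥(Set.Iio (α i)) → ↥(Set.Iio (α i)) → Prop) := by
      intro i i' h
      rw [typeIio (α i'), typeIio (α i)]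
      exact Ordinal.lift_le.2 (hmono i i' h)
    have hβadd : ∀ i : Fin l, (i : ℕ) < l - 1 →
        ∀ ξ < Ordinal.type ((·<·) : ↥(Set.Iio (α i)) → ↥(Set.Iio (α i)) → Prop),
          ξ + Ordinal.type ((·<·) : ↥(Set.Iio (α i)) → ↥(Set.Iio (α i)) → Prop)
            = Ordinal.type ((·<·) : ↥(Set.Iio (α i)) → ↥(Set.Iio (α i)) → Prop) := by
      intro i hi ξ hξ
      rw [typeIio (α i)] at hξ ⊢
      obtain ⟨ξ', hlt, rfl⟩ := Ordinal.lt_lift_iff.1 hξ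
      rw [← Ordinal.lift_add]
      have hsum : ξ' + α i = α i := by
        have h2 := Ordinal.add_sub_cancel_of_le hlt.le
        rwa [hrem i hi ξ' hlt] at h2
      rw [hsum]
    have hAle : ∀ i : Fin l,
        Ordinal.type ((·<·) : ↥(A i) → ↥(A i) → Prop)
          ≤ Ordinal.type ((·<·) : ↥(Set.Iio (α i)) → ↥(Set.Iio (α i)) → Prop) := by
      intro i
      exact (@RelEmbedding.ofMonotone ↥(A i) ↥(Set.Iio (α i)) (·<·) (·<·) _ _
        (fun x => ⟨x.1, x.2.choose⟩)
        (fun a b hab => hab)).ordinal_type_le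
    have hAeq : ∀ i : Fin l,
        Ordinal.type ((·<·) : ↥(A i) → ↥(A i) → Prop)
          = Ordinal.type ((·<·) : ↥(Set.Iio (α i)) → ↥(Set.Iio (α i)) → Prop) := by
      intro i
      by_contra hne
      have hlt := lt_of_le_of_ne (hAle i) hne
      exact absurd h1 (not_le.2 (strictLemma l
        (fun i => Ordinal.type ((·<·) : ↥(Set.Iio (α i)) → ↥(Set.Iio (α i)) → Prop))
        (fun i => Ordinal.type ((·<·) : ↥(A i) → ↥(A i) → Prop))
        hβmono hβadd hAle i hlt))
    -- order isomorphisms from each summand onto its trace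
    have φ0 : ∀ i : Fin l, Nonempty (↥(Set.Iio (α i)) ≃o ↥(A i)) := by
      intro i
      obtain ⟨riso⟩ := Ordinal.type_eq.1 (hAeq i)
      exact ⟨(OrderIso.ofRelIsoLT riso).symm⟩
    let φ : ∀ i : Fin l, ↥(Set.Iio (α i)) ≃o ↥(A i) := fun i => (φ0 i).some
    -- the copy of the subsum inside itself whose image lands in U
    let ρ : (Σₗ i : Fin m, ↥(Set.Iio (α (j i)))) → (Σₗ i : Fin m, ↥(Set.Iio (α (j i)))) :=
      fun s => toLex ⟨(ofLex s).1,
        ⟨((φ (j (ofLex s).1) (ofLex s).2 : ↥(A (j (ofLex s).1))) : Ordinal),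
          (φ (j (ofLex s).1) (ofLex s).2).2.choose⟩⟩
    have hρ : StrictMono ρ := by
      intro a b hab
      have hab' : Sigma.Lex (·<·) (fun _ => (·<·)) (ofLex a) (ofLex b) := hab
      cases hab' with
      | left x y hij => exact Sigma.Lex.left _ _ hij
      | right x y hxy =>
        exact Sigma.Lex.right _ _ (Subtype.mk_lt_mk.2 ((φ _).lt_iff_lt.2 hxy))
    refine ⟨Set.range ρ, ⟨(StrictMono.orderIso ρ hρ).symm⟩, ?_⟩
    have hIU : ∀ s, uS (ρ s) ∈ U := fun s =>
      (φ (j (ofLex s).1) (ofLex s).2).2.choose_spec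
    have hsub : (χ '' {g | ∀ i, g i ∈ Set.range ρ}) ⊆ (χ' '' {h | ∀ i, h i ∈ U}) := by
      rintro c ⟨g, hg, rfl⟩
      have hmem : ∀ i0 : Fin n, (g.trans ι) i0 ∈ U := by
        intro i0
        obtain ⟨s, hs⟩ := hg i0
        show uS (g i0) ∈ U
        rw [← hs]
        exact hIU s
      refine ⟨g.trans ι, hmem, ?_⟩
      show χ' (g.trans ι) = χ g
      have hex : ∃ g' : Fin n ↪o (Σₗ i : Fin m, ↥(Set.Iio (α (j i)))),
          g.trans ι = g'.trans ι := ⟨g, rfl⟩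
      have hval : χ' (g.trans ι) = χ hex.choose := dif_pos hex
      have hgeq : hex.choose = g := by
        have hcg := hex.choose_spec
        apply DFunLike.ext
        intro x
        apply ι.injective
        exact (DFunLike.congr_fun hcg x).symm
      rw [hval, hgeq]
    calc (χ '' {g | ∀ i, g i ∈ Set.range ρ}).ncard
        ≤ (χ' '' {h | ∀ i, h i ∈ U}).ncard := Set.ncard_le_ncard hsub (Set.toFinite _)
      _ ≤ t := hcard
  exact ⟨fun n hn => (hfin n hn).imp (fun t ht => key n t ht), fun n _ t ht => key n t ht⟩
end

section
/- For all integers n ≥ 1, the big Ramsey degree of the n-element chain in the integers ℤ (with the usual order) equals 2^n: for every k ≥ 2 and every k-coloring of the n-element subsets of ℤ there is a subchain of ℤ order-isomorphic to ℤ attaining at most 2^n colors, and there is a coloring forcing exactly 2^n colors on every such subchain. -/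
open Set

/-- Interleaving key: `0 ≤ x ↦ 2x`, `x < 0 ↦ -2x-1`. -/
private def zkey (x : ℤ) : ℕ := if 0 ≤ x then (2 * x).toNat else (-(2 * x) - 1).toNat

private theorem zkey_of_nonneg {x : ℤ} (h : 0 ≤ x) : (zkey x : ℤ) = 2 * x := by
  simp only [zkey, if_pos h]; omega

private theorem zkey_of_neg {x : ℤ} (h : x < 0) : (zkey x : ℤ) = -(2 * x) - 1 := by
  simp only [zkey, if_neg (not_le.mpr h)]; omega

private theorem zkey_inj : Function.Injective zkey := by
  intro x y h
  rcases le_or_gt 0 x with hx | hx <;> rcases le_or_gt 0 y with hy | hy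
  · have := zkey_of_nonneg hx; have := zkey_of_nonneg hy; omega
  · have := zkey_of_nonneg hx; have := zkey_of_neg hy; omega
  · have := zkey_of_neg hx; have := zkey_of_nonneg hy; omega
  · have := zkey_of_neg hx; have := zkey_of_neg hy; omega

private theorem zkey_odd_iff {x : ℤ} : zkey x % 2 = 1 ↔ x < 0 := by
  rcases le_or_gt 0 x with hx | hx
  · have := zkey_of_nonneg hx; constructor
    · intro h; omega
    · intro h; omega
  · have := zkey_of_neg hx; constructor
    · intro _; exact hx
    · intro _; omega

private theorem zkey_lt_of_natAbs {x y : ℤ} (h : x.natAbs < y.natAbs) : zkey x < zkey y := by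
  rcases le_or_gt 0 x with hx | hx <;> rcases le_or_gt 0 y with hy | hy <;>
    [skip; skip; skip; skip] <;>
  · have h1 := zkey_of_nonneg (x := x); have h2 := zkey_of_neg (x := x)
    have h3 := zkey_of_nonneg (x := y); have h4 := zkey_of_neg (x := y)
    omega


private theorem image_orderEmbOfFin {α : Type*} [LinearOrder α] (s : Finset α) {n : ℕ}
    (h : s.card = n) : Finset.image (⇑(s.orderEmbOfFin h)) Finset.univ = s := by
  apply Finset.eq_of_subset_of_card_le
  · intro x hx
    obtain ⟨i, _, rfl⟩ := Finset.mem_image.mp hx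
    exact s.orderEmbOfFin_mem h i
  · rw [h, Finset.card_image_of_injective _ (s.orderEmbOfFin h).injective,
      Finset.card_univ, Fintype.card_fin]

private theorem card_image_univ {α : Type*} [DecidableEq α] {n : ℕ} {y : Fin n → α}
    (hy : Function.Injective y) : (Finset.image y Finset.univ).card = n := by
  rw [Finset.card_image_of_injective _ hy, Finset.card_univ, Fintype.card_fin]

/-- The finset of keys of the image of `f`. -/
private def keyset {n : ℕ} (f : Fin n ↪o ℤ) : Finset ℕ :=
  Finset.image (fun i => zkey (f i)) Finset.univ

private theorem keyset_card {n : ℕ} (f : Fin n ↪o ℤ) : (keyset f).card = n :=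
  card_image_univ (zkey_inj.comp f.injective)

/-- The increasing enumeration of the keys of the image of `f`. -/
private def kenum {n : ℕ} (f : Fin n ↪o ℤ) : Fin n → ℕ :=
  ⇑((keyset f).orderEmbOfFin (keyset_card f))

/-- The pattern of `f` : which ranks (in key order) are negative. -/
private def pat {n : ℕ} (f : Fin n ↪o ℤ) : Fin n → Bool :=
  fun i => decide (kenum f i % 2 = 1)

private theorem kenum_mem {n : ℕ} (f : Fin n ↪o ℤ) (i : Fin n) :
    ∃ l, kenum f i = zkey (f l) := by
  have := (keyset f).orderEmbOfFin_mem (keyset_card f) i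
  simp only [keyset, Finset.mem_image, Finset.mem_univ, true_and] at this
  obtain ⟨l, hl⟩ := this
  exact ⟨l, hl.symm⟩

/-- If the image of `f` agrees with the image of `y` and `zkey ∘ y` is strictly monotone,
then `kenum f = zkey ∘ y`. -/
private theorem kenum_eq {n : ℕ} {f : Fin n ↪o ℤ} {y : Fin n → ℤ}
    (hmono : StrictMono fun i => zkey (y i))
    (him : Finset.image (⇑f) Finset.univ = Finset.image y Finset.univ) :
    kenum f = fun i => zkey (y i) := by
  have hks : keyset f = Finset.image (fun i => zkey (y i)) Finset.univ := by
    have : keyset f = Finset.image zkey (Finset.image (⇑f) Finset.univ) := by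
      rw [Finset.image_image]; rfl
    rw [this, him, Finset.image_image]; rfl
  have : (fun i => zkey (y i)) = ⇑((keyset f).orderEmbOfFin (keyset_card f)) := by
    apply Finset.orderEmbOfFin_unique
    · intro i; rw [hks]; exact Finset.mem_image_of_mem _ (Finset.mem_univ i)
    · exact hmono
  exact this.symm

/-- Every order embedding is the canonical enumeration of its image. -/
private theorem eq_orderEmbOfFin_image {n : ℕ} (f : Fin n ↪o ℤ) :
    f = (Finset.image (⇑f) Finset.univ).orderEmbOfFin (card_image_univ f.injective) :=
  Finset.orderEmbOfFin_unique' _ (fun i => Finset.mem_image_of_mem _ (Finset.mem_univ i))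

/-- The element with magnitude `a` and sign `s`. -/
private def zel (a : ℕ) (s : Bool) : ℤ := if s then -(a : ℤ) - 1 else (a : ℤ)

private theorem zkey_zel (a : ℕ) (s : Bool) : zkey (zel a s) = 2 * a + (if s then 1 else 0) := by
  cases s
  · have := zkey_of_nonneg (x := (a : ℤ)) (by positivity)
    simp only [zel, Bool.false_eq_true, if_false]
    omega
  · have := zkey_of_neg (x := -(a : ℤ) - 1) (by omega)
    simp only [zel, if_true]
    omega

private theorem zel_keymono {n : ℕ} {a : Fin n → ℕ} (ha : StrictMono a) (σ : Fin n → Bool) :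
    StrictMono fun i => zkey (zel (a i) (σ i)) := by
  intro i j hij
  simp only [zkey_zel]
  have := ha hij
  rcases σ i <;> rcases σ j <;> simp <;> omega

private theorem zel_inj {n : ℕ} {a : Fin n → ℕ} (ha : StrictMono a) (σ : Fin n → Bool) :
    Function.Injective fun i => zel (a i) (σ i) := by
  intro i j h
  exact (zel_keymono ha σ).injective (congrArg zkey h)


private def emb {n : ℕ} (a : Fin n ↪o ℕ) (σ : Fin n → Bool) : Fin n ↪o ℤ :=
  (Finset.image (fun i => zel (a i) (σ i)) Finset.univ).orderEmbOfFin
    (card_image_univ (zel_inj a.strictMono σ))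

private theorem emb_unique {n : ℕ} {f : Fin n ↪o ℤ} (a : Fin n ↪o ℕ) (σ : Fin n → Bool)
    (hfi : ∀ i, f i ∈ Finset.image (fun i => zel (a i) (σ i)) Finset.univ) :
    f = emb a σ :=
  Finset.orderEmbOfFin_unique' _ hfi

private theorem infRamsey {γ : Type} [Finite γ] [Nonempty γ] :
    ∀ (n : ℕ) (c : Finset ℕ → γ) (S : Set ℕ), S.Infinite →
    ∃ M : Set ℕ, M ⊆ S ∧ M.Infinite ∧
      ∃ v, ∀ A : Finset ℕ, ↑A ⊆ M → A.card = n → c A = v := by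
  intro n
  induction n with
  | zero =>
    intro c S hS
    exact ⟨S, subset_rfl, hS, c ∅, fun A _ hA => by rw [Finset.card_eq_zero.mp hA]⟩
  | succ n ih =>
    intro c S hS
    have step : ∀ T : Set ℕ, ∃ (a : ℕ) (T' : Set ℕ) (v : γ), T.Infinite →
        a ∈ T ∧ T' ⊆ T ∧ T'.Infinite ∧ (∀ x ∈ T', a < x) ∧
        ∀ B : Finset ℕ, ↑B ⊆ T' → B.card = n → c (insert a B) = v := by
      intro T
      by_cases hT : T.Infinite
      · set a := sInf T with ha
        have haT : a ∈ T := Nat.sInf_mem hT.nonempty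
        have hinf : (T \ Set.Iic a).Infinite := hT.diff (Set.finite_Iic a)
        obtain ⟨M', hM'sub, hM'inf, v, hv⟩ := ih (fun B => c (insert a B)) _ hinf
        refine ⟨a, M', v, fun _ => ⟨haT, fun x hx => (hM'sub hx).1, hM'inf,
          fun x hx => ?_, hv⟩⟩
        have := (hM'sub hx).2
        simp only [Set.mem_Iic, not_le] at this
        exact this
      · exact ⟨0, ∅, Classical.arbitrary γ, fun h => absurd h hT⟩
    choose nxa nxT nxv hstep using step
    set G : ℕ → Set ℕ := fun i => Nat.rec S (fun _ T => nxT T) i with hG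
    have hGsucc : ∀ i, G (i + 1) = nxT (G i) := fun i => rfl
    have hGinf : ∀ i, (G i).Infinite ∧ G i ⊆ S := by
      intro i
      induction i with
      | zero => exact ⟨hS, subset_rfl⟩
      | succ i hi =>
        obtain ⟨_, hsub, hinf, _, _⟩ := hstep (G i) hi.1
        exact ⟨hinf, hsub.trans hi.2⟩
    set A : ℕ → ℕ := fun i => nxa (G i) with hA
    set V : ℕ → γ := fun i => nxv (G i) with hV
    have hstep' := fun i => hstep (G i) (hGinf i).1
    have chain : ∀ i j, i ≤ j → G j ⊆ G i := by
      intro i j hij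
      induction j, hij using Nat.le_induction with
      | base => exact subset_rfl
      | succ j hij hi => exact ((hstep' j).2.1).trans hi
    have hmemA : ∀ i j, i < j → A j ∈ G (i + 1) := fun i j hij =>
      chain (i + 1) j hij ((hstep' j).1)
    have hAmono : StrictMono A := fun i j hij =>
      (hstep' i).2.2.2.1 (A j) (hmemA i j hij)
    obtain ⟨v, hv⟩ := Finite.exists_infinite_fiber V
    have hI : (V ⁻¹' {v}).Infinite := Set.infinite_coe_iff.mp hv
    refine ⟨A '' (V ⁻¹' {v}), ?_, hI.image hAmono.injective.injOn, v, ?_⟩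
    · rintro x ⟨i, _, rfl⟩
      exact (hGinf i).2 ((hstep' i).1)
    · intro B hB hcard
      have hne : B.Nonempty := Finset.card_pos.mp (by omega)
      obtain ⟨i, hiI, hib⟩ := hB (B.min'_mem hne)
      have hB' : ↑(B.erase (B.min' hne)) ⊆ G (i + 1) := by
        intro x hx
        simp only [Finset.coe_erase, Set.mem_diff, Set.mem_singleton_iff] at hx
        obtain ⟨j, hjI, rfl⟩ := hB hx.1
        have : B.min' hne < A j := lt_of_le_of_ne (B.min'_le _ hx.1) (Ne.symm hx.2)
        rw [← hib] at this
        exact hmemA i j (hAmono.lt_iff_lt.mp this)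
      have hcard' : (B.erase (B.min' hne)).card = n := by
        rw [Finset.card_erase_of_mem (B.min'_mem hne)]; omega
      have heq : c (insert (A i) (B.erase (B.min' hne))) = V i :=
        (hstep' i).2.2.2.2 _ hB' hcard'
      rw [hib, Finset.insert_erase (B.min'_mem hne)] at heq
      rw [heq]
      simpa using hiI

private theorem upperBound (n : ℕ) : ∀ k : ℕ, 2 ≤ k → ∀ χ : (Fin n ↪o ℤ) → Fin k,
    ∃ U : Set ℤ, Nonempty (U ≃o ℤ) ∧ (χ '' {f | ∀ i, f i ∈ U}).ncard ≤ 2 ^ n := by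
  intro k hk χ
  have : Nonempty (Fin k) := ⟨⟨0, by omega⟩⟩
  set col : Finset ℕ → ((Fin n → Bool) → Fin k) := fun A σ =>
    if h : A.card = n then χ (emb (A.orderEmbOfFin h) σ) else Classical.arbitrary _
    with hcolDef
  obtain ⟨M, -, hMinf, v, hmono⟩ := infRamsey n col Set.univ Set.infinite_univ
  set m : ℕ → ℕ := Nat.nth (· ∈ M) with hmDef
  have hmmono : StrictMono m := Nat.nth_strictMono hMinf
  have hmmem : ∀ j, m j ∈ M := fun j => Nat.nth_mem_of_infinite hMinf j
  set e : ℤ → ℤ := fun t => if 0 ≤ t then ((m (2 * t.toNat) : ℕ) : ℤ)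
    else -(m (2 * (-t - 1).toNat + 1) : ℤ) - 1 with heDef
  have he : StrictMono e := by
    intro t t' h
    rcases le_or_gt 0 t with ht | ht <;> rcases le_or_gt 0 t' with ht' | ht'
    · simp only [heDef, if_pos ht, if_pos ht']
      have h2 : (2 * t.toNat) < 2 * t'.toNat := by omega
      exact_mod_cast hmmono h2
    · omega
    · simp only [heDef, if_neg (not_le.mpr ht), if_pos ht']
      have h1 : (0:ℤ) ≤ ((m (2 * t'.toNat) : ℕ) : ℤ) := Int.ofNat_nonneg _
      omega
    · simp only [heDef, if_neg (not_le.mpr ht), if_neg (not_le.mpr ht')]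
      have h2 : 2 * (-t' - 1).toNat + 1 < 2 * (-t - 1).toNat + 1 := by omega
      have h3 := hmmono h2
      omega
  refine ⟨Set.range e, ⟨(StrictMono.orderIso e he).symm⟩, ?_⟩
  have hsub : χ '' {f | ∀ i, f i ∈ Set.range e} ⊆ Set.range v := by
    rintro _ ⟨f, hf, rfl⟩
    choose t ht using hf
    have hfact : ∀ i, ∃ j : ℕ, zkey (f i) = 2 * m j + j % 2 := by
      intro i
      rcases le_or_gt 0 (t i) with h0 | h0
      · refine ⟨2 * (t i).toNat, ?_⟩
        have hfi : f i = ((m (2 * (t i).toNat) : ℕ) : ℤ) := by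
          rw [← ht i]; simp only [heDef, if_pos h0]
        have h1 := zkey_of_nonneg (x := f i) (by rw [hfi]; positivity)
        omega
      · refine ⟨2 * (-(t i) - 1).toNat + 1, ?_⟩
        have hfi : f i = -(m (2 * (-(t i) - 1).toNat + 1) : ℤ) - 1 := by
          rw [← ht i]; simp only [heDef, if_neg (not_le.mpr h0)]
        have h1 := zkey_of_neg (x := f i) (by rw [hfi]; omega)
        omega
    choose j hj using hfact
    choose l hl using kenum_mem f
    set a : Fin n → ℕ := fun i => kenum f i / 2 with haDef
    set σ : Fin n → Bool := pat f with hσDef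
    have kmono : StrictMono (kenum f) := ((keyset f).orderEmbOfFin (keyset_card f)).strictMono
    have haM : ∀ i, ∃ jj, a i = m jj ∧ jj % 2 = kenum f i % 2 := by
      intro i
      refine ⟨j (l i), ?_, ?_⟩ <;>
      · have h1 := hj (l i)
        have h2 := hl i
        have h3 : a i = kenum f i / 2 := rfl
        omega
    have hkey' : ∀ i, kenum f i = 2 * a i + kenum f i % 2 := by
      intro i; simp only [haDef]; omega
    have hbit : ∀ i, (if σ i then 1 else 0) = kenum f i % 2 := by
      intro i
      rcases Nat.mod_two_eq_zero_or_one (kenum f i) with h | h <;> simp [hσDef, pat, h]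
    have hkey : ∀ i, kenum f i = 2 * a i + (if σ i then 1 else 0) := by
      intro i; rw [hbit i]; exact hkey' i
    have hamono : StrictMono a := by
      intro i i' hii
      have hk := kmono hii
      have h1 := hkey' i
      have h2 := hkey' i'
      rcases lt_or_eq_of_le (show a i ≤ a i' by omega) with h | h
      · exact h
      · exfalso
        obtain ⟨J, hJ1, hJ2⟩ := haM i
        obtain ⟨J', hJ1', hJ2'⟩ := haM i'
        have hJJ : J = J' := hmmono.injective (by omega)
        omega
    set A : Finset ℕ := Finset.image a Finset.univ with hADef
    have hAcard : A.card = n := card_image_univ hamono.injective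
    have hAsubM : (↑A : Set ℕ) ⊆ M := by
      intro x hx
      simp only [hADef, Finset.coe_image, Finset.coe_univ, Set.image_univ,
        Set.mem_range] at hx
      obtain ⟨i, rfl⟩ := hx
      obtain ⟨J, hJ1, -⟩ := haM i
      rw [hJ1]; exact hmmem J
    set aE : Fin n ↪o ℕ := OrderEmbedding.ofStrictMono a hamono with haEDef
    have hae : A.orderEmbOfFin hAcard = aE :=
      (Finset.orderEmbOfFin_unique' hAcard
        (fun i => Finset.mem_image_of_mem _ (Finset.mem_univ i))).symm
    have himg : Finset.image (fun i => zel (aE i) (σ i)) Finset.univ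
        = Finset.image (⇑f) Finset.univ := by
      apply Finset.image_injective zkey_inj
      rw [Finset.image_image, Finset.image_image]
      have h1 : (zkey ∘ fun i => zel (aE i) (σ i)) = kenum f := by
        funext i
        simp only [Function.comp_apply, zkey_zel]
        exact (hkey i).symm
      rw [h1]
      have h2 : (zkey ∘ ⇑f) = fun i => zkey (f i) := rfl
      rw [h2]
      exact (image_orderEmbOfFin (keyset f) (keyset_card f)).trans rfl
    have hfemb : f = emb aE σ := by
      apply emb_unique
      intro i
      rw [himg]
      exact Finset.mem_image_of_mem _ (Finset.mem_univ i)
    refine ⟨σ, ?_⟩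
    have hcA := hmono A hAsubM hAcard
    have : col A σ = χ (emb aE σ) := by
      simp only [hcolDef]
      rw [dif_pos hAcard, hae]
    rw [hfemb, ← this, hcA]
  refine le_trans (Set.ncard_le_ncard hsub (Set.toFinite _)) ?_
  rw [← Set.image_univ]
  refine le_trans (Set.ncard_image_le (Set.toFinite _)) ?_
  rw [Set.ncard_univ]
  simp [Nat.card_eq_fintype_card]


private theorem realize {n : ℕ} (U : Set ℤ) (hup : ∀ b : ℤ, ∃ u ∈ U, b < u)
    (hdn : ∀ b : ℤ, ∃ u ∈ U, u < b) (σ : Fin n → Bool) :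
    ∃ f : Fin n ↪o ℤ, (∀ i, f i ∈ U) ∧ pat f = σ := by
  have step : ∀ (b : ℕ) (s : Bool), ∃ u, u ∈ U ∧ (u < 0 ↔ s = true) ∧ b < u.natAbs := by
    intro b s
    cases s
    · obtain ⟨u, hu, h⟩ := hup b
      refine ⟨u, hu, ?_, by omega⟩
      simp only [Bool.false_eq_true, iff_false]
      omega
    · obtain ⟨u, hu, h⟩ := hdn (-(b : ℤ))
      refine ⟨u, hu, ?_, by omega⟩
      simp only [iff_true]
      omega
  choose P hP1 hP2 hP3 using step
  set σ' : ℕ → Bool := fun i => if h : i < n then σ ⟨i, h⟩ else false with hσ'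
  set x : ℕ → ℤ := fun i => Nat.rec (P 0 (σ' 0)) (fun i xi => P xi.natAbs (σ' (i + 1))) i
    with hxDef
  have hx0 : x 0 = P 0 (σ' 0) := rfl
  have hxs : ∀ i, x (i + 1) = P (x i).natAbs (σ' (i + 1)) := fun i => rfl
  have hmem : ∀ i, x i ∈ U := by
    intro i
    cases i with
    | zero => rw [hx0]; exact hP1 _ _
    | succ i => rw [hxs]; exact hP1 _ _
  have hsgn : ∀ i, x i < 0 ↔ σ' i = true := by
    intro i
    cases i with
    | zero => rw [hx0]; exact hP2 _ _
    | succ i => rw [hxs]; exact hP2 _ _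
  have habs : ∀ i, (x i).natAbs < (x (i + 1)).natAbs := by
    intro i
    have := hP3 (x i).natAbs (σ' (i + 1))
    rw [hxs]
    exact this
  have hkmono : StrictMono fun i => zkey (x i) :=
    strictMono_nat_of_lt_succ fun i => zkey_lt_of_natAbs (habs i)
  set y : Fin n → ℤ := fun i => x i with hy
  have hymono : StrictMono fun i : Fin n => zkey (y i) :=
    fun i j hij => hkmono (show (i : ℕ) < (j : ℕ) from hij)
  have hyinj : Function.Injective y := fun i j h => hymono.injective (congrArg zkey h)
  have hTcard : (Finset.image y Finset.univ).card = n := card_image_univ hyinj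
  refine ⟨(Finset.image y Finset.univ).orderEmbOfFin hTcard, ?_, ?_⟩
  · intro i
    have hmem2 := (Finset.image y Finset.univ).orderEmbOfFin_mem hTcard i
    simp only [Finset.mem_image] at hmem2
    obtain ⟨l, -, hl⟩ := hmem2
    rw [← hl]
    exact hmem l
  · have hk := kenum_eq (f := (Finset.image y Finset.univ).orderEmbOfFin hTcard) hymono
      (image_orderEmbOfFin _ _)
    funext i
    simp only [pat, hk]
    have h1 := hsgn (i : ℕ)
    have h2 : σ' (i : ℕ) = σ i := by
      simp only [hσ']
      rw [dif_pos i.isLt, Fin.eta]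
    rw [← h2]
    cases hb : σ' (i : ℕ) with
    | true =>
      apply decide_eq_true
      exact zkey_odd_iff.mpr (h1.mpr hb)
    | false =>
      apply decide_eq_false
      intro hcon
      have h3 := h1.mp (zkey_odd_iff.mp hcon)
      rw [hb] at h3
      exact Bool.false_ne_true h3

/-- `T(n, ℤ) = 2 ^ n`: every finite coloring of the `n`-element subchains of `ℤ` admits a
subchain order-isomorphic to `ℤ` with at most `2 ^ n` colors, and some coloring attains
exactly `2 ^ n` colors on every subchain order-isomorphic to `ℤ`. -/
theorem stmt19 (n : ℕ) (hn : 1 ≤ n) :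
    brdLE ℤ n (2 ^ n) ∧
    ∃ k : ℕ, 2 ≤ k ∧ ∃ χ : (Fin n ↪o ℤ) → Fin k,
      ∀ U : Set ℤ, Nonempty (U ≃o ℤ) →
        (χ '' {f | ∀ i, f i ∈ U}).ncard = 2 ^ n := by
  refine ⟨upperBound n, ?_⟩
  obtain ⟨E⟩ : Nonempty ((Fin n → Bool) ≃ Fin (2 ^ n)) :=
    ⟨(Equiv.arrowCongr (Equiv.refl (Fin n)) finTwoEquiv.symm).trans finFunctionFinEquiv⟩
  have hk2 : 2 ≤ 2 ^ n := by
    have := Nat.one_lt_two_pow_iff (n := n)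
    omega
  refine ⟨2 ^ n, hk2, fun f => E (pat f), ?_⟩
  rintro U ⟨ν⟩
  have hup : ∀ b : ℤ, ∃ u ∈ U, b < u := by
    intro b
    by_contra hcon
    push_neg at hcon
    obtain ⟨lub, hlub, hmax⟩ := Int.exists_greatest_of_bdd (P := fun z => z ∈ U)
      ⟨b, fun z hz => hcon z hz⟩ ⟨ν.symm 0, (ν.symm 0).2⟩
    set u' := ν.symm (ν ⟨lub, hlub⟩ + 1) with hu'
    have h1 : (⟨lub, hlub⟩ : U) < u' := by
      rw [← ν.lt_iff_lt, hu', ν.apply_symm_apply]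
      omega
    have h2 := hmax ↑u' u'.2
    have h3 : lub < (u' : ℤ) := h1
    omega
  have hdn : ∀ b : ℤ, ∃ u ∈ U, u < b := by
    intro b
    by_contra hcon
    push_neg at hcon
    obtain ⟨glb, hglb, hmin⟩ := Int.exists_least_of_bdd (P := fun z => z ∈ U)
      ⟨b, fun z hz => hcon z hz⟩ ⟨ν.symm 0, (ν.symm 0).2⟩
    set u' := ν.symm (ν ⟨glb, hglb⟩ - 1) with hu'
    have h1 : u' < (⟨glb, hglb⟩ : U) := by
      rw [← ν.lt_iff_lt, hu', ν.apply_symm_apply]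
      omega
    have h2 := hmin ↑u' u'.2
    have h3 : (u' : ℤ) < glb := h1
    omega
  have hsurj : (fun f => E (pat f)) '' {f : Fin n ↪o ℤ | ∀ i, f i ∈ U} = Set.univ := by
    apply Set.eq_univ_of_forall
    intro w
    obtain ⟨f, hf, hp⟩ := realize U hup hdn (E.symm w)
    refine ⟨f, hf, ?_⟩
    show E (pat f) = w
    rw [hp, E.apply_symm_apply]
  rw [hsurj, Set.ncard_univ]
  simp
end
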